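/- arXiv:2306.09041 — 8 statements merged into one kernel-verified Lean document; each statement's English description precedes it below -/
import Mathlib

section
/- Let A be a 3×3 real matrix whose third row is the negation of the sum of its first two rows, i.e. A(3,j) = −(A(1,j) + A(2,j)) for j = 1,2,3. Define the 2×2 matrix B by B(i,j) = A(i,j) − A(i,3) for i,j ∈ {1,2}. Then the characteristic polynomial of A factors as p_A(X) = X · p_B(X), where p_A and p_B denote the characteristic polynomials of A and B respectively. -/
/-- If the third row of a 3×3 real matrix `A` is the negation of the sum of its first two
rows, and `B` is the 2×2 matrix with entries `B i j = A i j − A i 2`, then the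
characteristic polynomial of `A` factors as `p_A(X) = X · p_B(X)`. -/
theorem charpoly_factor_of_row_sum_zero (A : Matrix (Fin 3) (Fin 3) ℝ)
    (hA : ∀ j : Fin 3, A 2 j = -(A 0 j + A 1 j))
    (B : Matrix (Fin 2) (Fin 2) ℝ)
    (hB : ∀ i j : Fin 2, B i j = A i.castSucc j.castSucc - A i.castSucc 2) :
    A.charpoly = Polynomial.X * B.charpoly := by
  have h0 := hA 0
  have h1 := hA 1
  have h2 := hA 2
  have b00 := hB 0 0
  have b01 := hB 0 1
  have b10 := hB 1 0
  have b11 := hB 1 1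
  simp only [Matrix.charpoly, Matrix.det_fin_three, Matrix.det_fin_two,
    Matrix.charmatrix_apply_eq, Matrix.charmatrix_apply_ne, Fin.isValue,
    ne_eq, Fin.reduceEq, not_false_eq_true] at *
  rw [h0, h1, h2, b00, b01, b10, b11]
  simp only [Fin.castSucc, Fin.isValue, map_sub, map_neg, map_add]
  simp only [show (Fin.castAdd 1 0 : Fin 3) = 0 from rfl, show (Fin.castAdd 1 1 : Fin 3) = 1 from rfl]
  ring
end

section
/- Let λ > 0, s1, s2, sB > 0, and let α, β ≥ 1 be real with α ≠ β + 1, and set δ = 1/(β + 1 − α). Define D = 1 + (s1/sB)^δ + (s2/sB)^δ and E7 = ((s1/sB)^δ / D, (s2/sB)^δ / D, 1/D). Then E7 is an equilibrium of the language competition system (F1 = F2 = F3 = 0 at E7), its three coordinates are strictly positive, and they sum to 1. -/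
open Real

set_option linter.unusedVariables false

/-- Right-hand side for the first monolingual group. -/
noncomputable def F1 (lam s1 s2 sB α β m1 m2 b : ℝ) : ℝ :=
  lam * s1 * m1 ^ α * b ^ (β + 1) - lam * sB * b ^ α * m1 ^ (β + 1)

/-- Right-hand side for the second monolingual group. -/
noncomputable def F2 (lam s1 s2 sB α β m1 m2 b : ℝ) : ℝ :=
  lam * s2 * m2 ^ α * b ^ (β + 1) - lam * sB * b ^ α * m2 ^ (β + 1)

/-- Right-hand side for the bilingual group. -/
noncomputable def F3 (lam s1 s2 sB α β m1 m2 b : ℝ) : ℝ :=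
  lam * sB * b ^ α * m1 ^ (β + 1) + lam * sB * b ^ α * m2 ^ (β + 1)
    - lam * s1 * m1 ^ α * b ^ (β + 1) - lam * s2 * m2 ^ α * b ^ (β + 1)
lemma key_eq (s sB α β δ : ℝ) (hs : 0 < s) (hsB : 0 < sB)
    (hne : β + 1 - α ≠ 0) (hδ : δ = 1 / (β + 1 - α)) (D : ℝ) (hD : 0 < D) :
    s * ((s / sB) ^ δ / D) ^ α * (1 / D) ^ (β + 1)
      = sB * (1 / D) ^ α * ((s / sB) ^ δ / D) ^ (β + 1) := by
  have hq : (0 : ℝ) < s / sB := div_pos hs hsB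
  have hr : (0 : ℝ) < (s / sB) ^ δ := rpow_pos_of_pos hq δ
  have h2 : ((s / sB) ^ δ) ^ (β + 1 - α) = s / sB := by
    rw [← rpow_mul hq.le, hδ, one_div, inv_mul_cancel₀ hne, rpow_one]
  have hbase : s * ((s / sB) ^ δ) ^ α = sB * ((s / sB) ^ δ) ^ (β + 1) := by
    have h1 : ((s / sB) ^ δ) ^ (β + 1)
        = ((s / sB) ^ δ) ^ α * ((s / sB) ^ δ) ^ (β + 1 - α) := by
      rw [← rpow_add hr]; ring_nf
    rw [h1, h2]
    field_simp
  rw [div_rpow hr.le hD.le, div_rpow hr.le hD.le,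
      div_rpow zero_le_one hD.le, div_rpow zero_le_one hD.le,
      one_rpow, one_rpow]
  have hDα : (0 : ℝ) < D ^ α := rpow_pos_of_pos hD α
  have hDβ : (0 : ℝ) < D ^ (β + 1) := rpow_pos_of_pos hD (β + 1)
  field_simp
  linear_combination hbase

/-- The interior coexistence point `E7` is an equilibrium of the language competition
system, has strictly positive coordinates, and its coordinates sum to 1. -/
theorem E7_is_equilibrium (lam s1 s2 sB α β δ : ℝ)
    (hlam : 0 < lam) (hs1 : 0 < s1) (hs2 : 0 < s2) (hsB : 0 < sB)
    (hα : 1 ≤ α) (hβ : 1 ≤ β) (hne : α ≠ β + 1) (hδ : δ = 1 / (β + 1 - α)) :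
    let D : ℝ := 1 + (s1 / sB) ^ δ + (s2 / sB) ^ δ
    let m1 : ℝ := (s1 / sB) ^ δ / D
    let m2 : ℝ := (s2 / sB) ^ δ / D
    let b : ℝ := 1 / D
    (F1 lam s1 s2 sB α β m1 m2 b = 0 ∧
     F2 lam s1 s2 sB α β m1 m2 b = 0 ∧
     F3 lam s1 s2 sB α β m1 m2 b = 0) ∧
    (0 < m1 ∧ 0 < m2 ∧ 0 < b) ∧
    m1 + m2 + b = 1 := by
  intro D m1 m2 b
  have hq1 : (0 : ℝ) < (s1 / sB) ^ δ := rpow_pos_of_pos (div_pos hs1 hsB) δ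
  have hq2 : (0 : ℝ) < (s2 / sB) ^ δ := rpow_pos_of_pos (div_pos hs2 hsB) δ
  have hD : (0 : ℝ) < D := by positivity
  have hne' : β + 1 - α ≠ 0 := by
    intro h; exact hne (by linarith)
  have k1 := key_eq s1 sB α β δ hs1 hsB hne' hδ D hD
  have k2 := key_eq s2 sB α β δ hs2 hsB hne' hδ D hD
  refine ⟨⟨?_, ?_, ?_⟩, ⟨by positivity, by positivity, by positivity⟩, ?_⟩
  · show lam * s1 * m1 ^ α * b ^ (β + 1) - lam * sB * b ^ α * m1 ^ (β + 1) = 0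
    simp only [m1, b]
    linear_combination lam * k1
  · show lam * s2 * m2 ^ α * b ^ (β + 1) - lam * sB * b ^ α * m2 ^ (β + 1) = 0
    simp only [m2, b]
    linear_combination lam * k2
  · show lam * sB * b ^ α * m1 ^ (β + 1) + lam * sB * b ^ α * m2 ^ (β + 1)
      - lam * s1 * m1 ^ α * b ^ (β + 1) - lam * s2 * m2 ^ α * b ^ (β + 1) = 0
    simp only [m1, m2, b]
    linear_combination (-lam) * k1 - lam * k2
  · show (s1 / sB) ^ δ / D + (s2 / sB) ^ δ / D + 1 / D = 1
    field_simp [D]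
    ring
end

section
/- Let λ > 0, s1, s2, sB > 0, and let α, β ≥ 1 be real with α ≠ β + 1, and set δ = 1/(β + 1 − α). Define E6 = (0, (s2/sB)^δ / (1 + (s2/sB)^δ), 1 / (1 + (s2/sB)^δ)). Then E6 is an equilibrium of the language competition system (F1 = F2 = F3 = 0 at E6), its second and third coordinates are strictly positive, and its coordinates sum to 1. -/
open Real

set_option linter.unusedVariables false

/-- The boundary point `E6` (first monolingual group extinct) is an equilibrium of the
language competition system, its second and third coordinates are strictly positive,
and its coordinates sum to 1. -/
theorem E6_is_equilibrium (lam s1 s2 sB α β δ : ℝ)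
    (hlam : 0 < lam) (hs1 : 0 < s1) (hs2 : 0 < s2) (hsB : 0 < sB)
    (hα : 1 ≤ α) (hβ : 1 ≤ β) (hne : α ≠ β + 1) (hδ : δ = 1 / (β + 1 - α)) :
    let m2 : ℝ := (s2 / sB) ^ δ / (1 + (s2 / sB) ^ δ)
    let b : ℝ := 1 / (1 + (s2 / sB) ^ δ)
    (F1 lam s1 s2 sB α β 0 m2 b = 0 ∧
     F2 lam s1 s2 sB α β 0 m2 b = 0 ∧
     F3 lam s1 s2 sB α β 0 m2 b = 0) ∧
    (0 < m2 ∧ 0 < b) ∧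
    0 + m2 + b = 1 := by
  intro m2 b
  set c : ℝ := (s2 / sB) ^ δ with hc_def
  have hc : 0 < c := Real.rpow_pos_of_pos (div_pos hs2 hsB) δ
  have hden : 0 < 1 + c := by linarith
  have hb : 0 < b := by positivity
  have hm2 : 0 < m2 := by positivity
  have hsub : β + 1 - α ≠ 0 := sub_ne_zero.mpr (Ne.symm hne)
  have hkey : c ^ (β + 1 - α) = s2 / sB := by
    rw [hc_def, ← Real.rpow_mul (le_of_lt (div_pos hs2 hsB))]
    rw [hδ, one_div, inv_mul_cancel₀ hsub, Real.rpow_one]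
  have hm2b : m2 = c * b := by
    show c / (1 + c) = c * (1 / (1 + c)); ring
  have hαpos : 0 < α := by linarith
  -- main balance equation
  have hbal : s2 * m2 ^ α * b ^ (β + 1) = sB * b ^ α * m2 ^ (β + 1) := by
    rw [hm2b, Real.mul_rpow hc.le hb.le, Real.mul_rpow hc.le hb.le]
    have h1 : c ^ (β + 1) = c ^ α * (s2 / sB) := by
      rw [← hkey, ← Real.rpow_add hc]; ring_nf
    rw [h1]
    have hbpow : b ^ α * b ^ (β + 1) = b ^ (β + 1) * b ^ α := by ring
    field_simp
  have h0 : (0 : ℝ) ^ α = 0 := Real.zero_rpow (ne_of_gt hαpos)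
  have h0' : (0 : ℝ) ^ (β + 1) = 0 := Real.zero_rpow (by positivity)
  have hF1 : F1 lam s1 s2 sB α β 0 m2 b = 0 := by
    simp [F1, h0, h0']
  have hF2 : F2 lam s1 s2 sB α β 0 m2 b = 0 := by
    unfold F2
    have : lam * s2 * m2 ^ α * b ^ (β + 1) = lam * sB * b ^ α * m2 ^ (β + 1) := by
      have := hbal; nlinarith [hbal]
    linarith
  have hF3 : F3 lam s1 s2 sB α β 0 m2 b = 0 := by
    unfold F3
    unfold F1 at hF1; unfold F2 at hF2
    linarith
  refine ⟨⟨hF1, hF2, hF3⟩, ⟨hm2, hb⟩, ?_⟩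
  show 0 + c / (1 + c) + 1 / (1 + c) = 1
  field_simp
  ring
end

section
/- Let λ > 0, s1, s2, sB > 0, and let α, β ≥ 1 be real with α ≠ β + 1, and set δ = 1/(β + 1 − α). Define E5 = ((s1/sB)^δ / (1 + (s1/sB)^δ), 0, 1 / (1 + (s1/sB)^δ)). Then E5 is an equilibrium of the language competition system (F1 = F2 = F3 = 0 at E5), its first and third coordinates are strictly positive, and its coordinates sum to 1. -/
open Real

set_option linter.unusedVariables false

/-- The boundary point `E5` (second monolingual group extinct) is an equilibrium of the
language competition system, its first and third coordinates are strictly positive,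
and its coordinates sum to 1. -/
theorem E5_is_equilibrium (lam s1 s2 sB α β δ : ℝ)
    (hlam : 0 < lam) (hs1 : 0 < s1) (hs2 : 0 < s2) (hsB : 0 < sB)
    (hα : 1 ≤ α) (hβ : 1 ≤ β) (hne : α ≠ β + 1) (hδ : δ = 1 / (β + 1 - α)) :
    let m1 : ℝ := (s1 / sB) ^ δ / (1 + (s1 / sB) ^ δ)
    let b : ℝ := 1 / (1 + (s1 / sB) ^ δ)
    (F1 lam s1 s2 sB α β m1 0 b = 0 ∧
     F2 lam s1 s2 sB α β m1 0 b = 0 ∧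
     F3 lam s1 s2 sB α β m1 0 b = 0) ∧
    (0 < m1 ∧ 0 < b) ∧
    m1 + 0 + b = 1 := by
  have hs : 0 < s1 / sB := div_pos hs1 hsB
  have hr : 0 < (s1 / sB) ^ δ := Real.rpow_pos_of_pos hs δ
  set r : ℝ := (s1 / sB) ^ δ with hrdef
  have h1r : 0 < 1 + r := by linarith
  have hd : β + 1 - α ≠ 0 := by intro h; apply hne; linarith
  have hrpow : r ^ (β + 1 - α) = s1 / sB := by
    rw [hrdef, ← Real.rpow_mul hs.le, hδ, one_div, inv_mul_cancel₀ hd, Real.rpow_one]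
  have hkey : s1 * r ^ α = sB * r ^ (β + 1) := by
    have h2 : r ^ (β + 1) = r ^ (β + 1 - α) * r ^ α := by
      rw [← Real.rpow_add hr]; ring_nf
    rw [h2, hrpow]
    field_simp
  have hα0 : α ≠ 0 := by positivity
  have hβ0 : β + 1 ≠ 0 := by positivity
  have hm1a : (r / (1 + r)) ^ α = r ^ α / (1 + r) ^ α :=
    Real.div_rpow hr.le h1r.le α
  have hm1b : (r / (1 + r)) ^ (β + 1) = r ^ (β + 1) / (1 + r) ^ (β + 1) :=
    Real.div_rpow hr.le h1r.le (β + 1)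
  have hba : (1 / (1 + r)) ^ α = 1 / (1 + r) ^ α := by
    rw [Real.div_rpow zero_le_one h1r.le, Real.one_rpow]
  have hbb : (1 / (1 + r)) ^ (β + 1) = 1 / (1 + r) ^ (β + 1) := by
    rw [Real.div_rpow zero_le_one h1r.le, Real.one_rpow]
  have hpa : (0:ℝ) < (1 + r) ^ α := Real.rpow_pos_of_pos h1r α
  have hpb : (0:ℝ) < (1 + r) ^ (β + 1) := Real.rpow_pos_of_pos h1r (β + 1)
  have hz1 : (0:ℝ) ^ α = 0 := Real.zero_rpow hα0
  have hz2 : (0:ℝ) ^ (β + 1) = 0 := Real.zero_rpow hβ0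
  have hF1 : F1 lam s1 s2 sB α β (r / (1 + r)) 0 (1 / (1 + r)) = 0 := by
    unfold F1
    rw [hm1a, hm1b, hba, hbb]
    rw [sub_eq_zero]
    field_simp
    linear_combination hkey
  have hF2 : F2 lam s1 s2 sB α β (r / (1 + r)) 0 (1 / (1 + r)) = 0 := by
    unfold F2
    rw [hz1, hz2]; ring
  have hF3 : F3 lam s1 s2 sB α β (r / (1 + r)) 0 (1 / (1 + r)) = 0 := by
    have : F3 lam s1 s2 sB α β (r / (1 + r)) 0 (1 / (1 + r)) =
        -(F1 lam s1 s2 sB α β (r / (1 + r)) 0 (1 / (1 + r)))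
        - F2 lam s1 s2 sB α β (r / (1 + r)) 0 (1 / (1 + r)) := by
      unfold F1 F2 F3; ring
    rw [this, hF1, hF2]; ring
  refine ⟨⟨hF1, hF2, hF3⟩, ⟨div_pos hr h1r, div_pos one_pos h1r⟩, ?_⟩
  field_simp
  ring
end

section
/- Let λ > 0, s1, s2, sB > 0, and let α, β ≥ 1 be real with α ≠ β + 1, and set δ = 1/(β + 1 − α). If (m1, m2, b) satisfies m1 > 0, m2 > 0, b > 0, m1 + m2 + b = 1, and F1(m1,m2,b) = F2(m1,m2,b) = F3(m1,m2,b) = 0, then (m1, m2, b) = E7, i.e. m1 = (s1/sB)^δ / D, m2 = (s2/sB)^δ / D, b = 1/D, where D = 1 + (s1/sB)^δ + (s2/sB)^δ. In other words, E7 is the unique interior equilibrium of the system on the simplex. -/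
open Real

set_option linter.unusedVariables false

/-- `E7` is the unique interior equilibrium of the language competition system on the
simplex. -/
theorem E7_unique_interior_equilibrium (lam s1 s2 sB α β δ : ℝ)
    (hlam : 0 < lam) (hs1 : 0 < s1) (hs2 : 0 < s2) (hsB : 0 < sB)
    (hα : 1 ≤ α) (hβ : 1 ≤ β) (hne : α ≠ β + 1) (hδ : δ = 1 / (β + 1 - α))
    (m1 m2 b : ℝ) (hm1 : 0 < m1) (hm2 : 0 < m2) (hb : 0 < b)
    (hsum : m1 + m2 + b = 1)
    (h1 : F1 lam s1 s2 sB α β m1 m2 b = 0)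
    (h2 : F2 lam s1 s2 sB α β m1 m2 b = 0)
    (h3 : F3 lam s1 s2 sB α β m1 m2 b = 0) :
    let D : ℝ := 1 + (s1 / sB) ^ δ + (s2 / sB) ^ δ
    m1 = (s1 / sB) ^ δ / D ∧ m2 = (s2 / sB) ^ δ / D ∧ b = 1 / D := by
  intro D
  have hne' : β + 1 - α ≠ 0 := by
    intro h; apply hne; linarith
  have key : ∀ s x : ℝ, 0 < s → 0 < x →
      lam * s * x ^ α * b ^ (β + 1) - lam * sB * b ^ α * x ^ (β + 1) = 0 →
      (s / sB) ^ δ = x / b := by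
    intro s x hs hx heq0
    have heq : s * (x ^ α * b ^ (β + 1)) = sB * (b ^ α * x ^ (β + 1)) := by
      have hl := hlam.ne'
      field_simp at heq0 ⊢
      nlinarith [heq0]
    have hdiv : s / sB = (x / b) ^ (β + 1 - α) := by
      rw [Real.div_rpow hx.le hb.le, Real.rpow_sub hx, Real.rpow_sub hb]
      have hxa : (0:ℝ) < x ^ α := Real.rpow_pos_of_pos hx α
      have hba : (0:ℝ) < b ^ α := Real.rpow_pos_of_pos hb α
      have hxb : (0:ℝ) < x ^ (β + 1) := Real.rpow_pos_of_pos hx (β + 1)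
      have hbb : (0:ℝ) < b ^ (β + 1) := Real.rpow_pos_of_pos hb (β + 1)
      field_simp
      nlinarith [heq]
    rw [hdiv, ← Real.rpow_mul (div_pos hx hb).le, hδ, mul_one_div, div_self hne',
      Real.rpow_one]
  have k1 : (s1 / sB) ^ δ = m1 / b := key s1 m1 hs1 hm1 h1
  have k2 : (s2 / sB) ^ δ = m2 / b := key s2 m2 hs2 hm2 h2
  have hD : D = 1 / b := by
    simp only [D, k1, k2]
    field_simp
    linarith
  refine ⟨?_, ?_, ?_⟩
  · rw [k1, hD]; field_simp
  · rw [k2, hD]; field_simp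
  · rw [hD]; field_simp
end

section
/- Let λ > 0, s1, s2, sB > 0, and let α, β ≥ 1 be real with α ≠ β + 1, and set δ = 1/(β + 1 − α). If (0, m2, b) satisfies m2 > 0, b > 0, m2 + b = 1, and F1(0,m2,b) = F2(0,m2,b) = F3(0,m2,b) = 0, then m2 = (s2/sB)^δ / (1 + (s2/sB)^δ) and b = 1/(1 + (s2/sB)^δ). In other words, E6 is the unique equilibrium on the open edge of the simplex where m1 = 0 and m2, b > 0. -/
open Real

set_option linter.unusedVariables false

/-- `E6` is the unique equilibrium on the open edge of the simplex where `m1 = 0`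
and `m2, b > 0`. -/
theorem E6_unique_edge_equilibrium (lam s1 s2 sB α β δ : ℝ)
    (hlam : 0 < lam) (hs1 : 0 < s1) (hs2 : 0 < s2) (hsB : 0 < sB)
    (hα : 1 ≤ α) (hβ : 1 ≤ β) (hne : α ≠ β + 1) (hδ : δ = 1 / (β + 1 - α))
    (m2 b : ℝ) (hm2 : 0 < m2) (hb : 0 < b) (hsum : m2 + b = 1)
    (h1 : F1 lam s1 s2 sB α β 0 m2 b = 0)
    (h2 : F2 lam s1 s2 sB α β 0 m2 b = 0)
    (h3 : F3 lam s1 s2 sB α β 0 m2 b = 0) :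
    m2 = (s2 / sB) ^ δ / (1 + (s2 / sB) ^ δ) ∧ b = 1 / (1 + (s2 / sB) ^ δ) := by

  have hd : β + 1 - α ≠ 0 := by
    intro h; apply hne; linarith
  have hr : (0:ℝ) < m2 / b := div_pos hm2 hb
  have key : s2 * m2 ^ α * b ^ (β + 1) = sB * b ^ α * m2 ^ (β + 1) := by
    have h2' : lam * (s2 * m2 ^ α * b ^ (β + 1))
        = lam * (sB * b ^ α * m2 ^ (β + 1)) := by
      unfold F2 at h2; linear_combination h2
    exact mul_left_cancel₀ hlam.ne' h2'
  have e1 : m2 ^ (β + 1 - α) * m2 ^ α = m2 ^ (β + 1) := by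
    rw [← rpow_add hm2]; ring_nf
  have e2 : b ^ (β + 1 - α) * b ^ α = b ^ (β + 1) := by
    rw [← rpow_add hb]; ring_nf
  have hratio : (m2 / b) ^ (β + 1 - α) = s2 / sB := by
    rw [div_rpow hm2.le hb.le, div_eq_div_iff (by positivity) (by positivity)]
    have hpos : (0:ℝ) < m2 ^ α * b ^ α := by positivity
    apply mul_right_cancel₀ hpos.ne'
    linear_combination sB * b ^ α * e1 - s2 * m2 ^ α * e2 - key
  have hrr : (s2 / sB) ^ δ = m2 / b := by
    rw [← hratio, ← rpow_mul hr.le, hδ, mul_one_div_cancel hd, rpow_one]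
  have ht : (0:ℝ) < (s2 / sB) ^ δ := by positivity
  have hm2b : m2 = (s2 / sB) ^ δ * b := by
    field_simp at hrr; linarith
  have hbval : b = 1 / (1 + (s2 / sB) ^ δ) := by
    rw [eq_div_iff (by positivity)]
    nlinarith [hsum, hm2b]
  refine ⟨?_, hbval⟩
  rw [hm2b, hbval]; ring
end

section
/- Consider the reduced two-dimensional language competition system obtained by substituting b = 1 − m1 − m2: f(m1,m2) = λ s1 m1^α (1−m1−m2)^(β+1) − λ sB (1−m1−m2)^α m1^(β+1) and g(m1,m2) = λ s2 m2^α (1−m1−m2)^(β+1) − λ sB (1−m1−m2)^α m2^(β+1). If α > 1 and β > 0 are real and (m1*, m2*) satisfies m1* > 0, m2* > 0 and m1* + m2* = 1 (so b = 0), then the map (m1,m2) ↦ (f(m1,m2), g(m1,m2)) has Fréchet derivative equal to the zero linear map at (m1*, m2*); i.e. the Jacobian J4 at every equilibrium of the family E4 is the zero matrix. -/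
open Real

set_option linter.unusedVariables false

/-- Right-hand side of the reduced planar system for the first monolingual group,
obtained by substituting `b = 1 - m1 - m2`. -/
noncomputable def fRed (lam s1 s2 sB α β m1 m2 : ℝ) : ℝ :=
  lam * s1 * m1 ^ α * (1 - m1 - m2) ^ (β + 1)
    - lam * sB * (1 - m1 - m2) ^ α * m1 ^ (β + 1)

/-- Right-hand side of the reduced planar system for the second monolingual group. -/
noncomputable def gRed (lam s1 s2 sB α β m1 m2 : ℝ) : ℝ :=
  lam * s2 * m2 ^ α * (1 - m1 - m2) ^ (β + 1)
    - lam * sB * (1 - m1 - m2) ^ α * m2 ^ (β + 1)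

/-- At every equilibrium of the family `E4 = (m1*, 1 - m1*, 0)` (bilingual group extinct),
the Jacobian of the reduced planar system is the zero matrix: the map
`(m1, m2) ↦ (f(m1,m2), g(m1,m2))` has Fréchet derivative zero at `(m1*, m2*)`. -/
theorem jacobian_zero_at_E4 (lam s1 s2 sB α β : ℝ)
    (hlam : 0 < lam) (hs1 : 0 < s1) (hs2 : 0 < s2) (hsB : 0 < sB)
    (hα : 1 < α) (hβ : 0 < β)
    (m1s m2s : ℝ) (hm1 : 0 < m1s) (hm2 : 0 < m2s) (hsum : m1s + m2s = 1) :
    HasFDerivAt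
      (fun p : ℝ × ℝ => (fRed lam s1 s2 sB α β p.1 p.2, gRed lam s1 s2 sB α β p.1 p.2))
      (0 : ℝ × ℝ →L[ℝ] ℝ × ℝ) (m1s, m2s) := by
  have hu0 : 1 - m1s - m2s = 0 := by linarith
  set p0 : ℝ × ℝ := (m1s, m2s) with hp0
  -- derivative of u(p) = 1 - p.1 - p.2
  have hu : HasFDerivAt (fun p : ℝ × ℝ => 1 - p.1 - p.2)
      (((0 : ℝ × ℝ →L[ℝ] ℝ) - ContinuousLinearMap.fst ℝ ℝ ℝ)
        - ContinuousLinearMap.snd ℝ ℝ ℝ) p0 :=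
    ((hasFDerivAt_const (1:ℝ) p0).sub (hasFDerivAt_fst)).sub (hasFDerivAt_snd)
  set Lu := ((0 : ℝ × ℝ →L[ℝ] ℝ) - ContinuousLinearMap.fst ℝ ℝ ℝ)
        - ContinuousLinearMap.snd ℝ ℝ ℝ
  -- x ↦ x^γ has derivative 0 at 0, for γ > 1
  have key : ∀ γ : ℝ, 1 < γ → HasDerivAt (fun x : ℝ => x ^ γ) 0 (1 - m1s - m2s) := by
    intro γ hγ
    have h := Real.hasDerivAt_rpow_const (x := 0) (p := γ) (Or.inr hγ.le)
    rw [hu0]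
    simpa [Real.zero_rpow (by linarith : γ - 1 ≠ 0)] using h
  have hβ1 : (1 : ℝ) < β + 1 := by linarith
  have huα : HasFDerivAt (fun p : ℝ × ℝ => (1 - p.1 - p.2) ^ α)
      ((0 : ℝ) • Lu) p0 := by
    have := (key α hα).comp_hasFDerivAt p0 hu; exact this
  have huβ : HasFDerivAt (fun p : ℝ × ℝ => (1 - p.1 - p.2) ^ (β + 1))
      ((0 : ℝ) • Lu) p0 := by
    have := (key (β + 1) hβ1).comp_hasFDerivAt p0 hu; exact this
  -- derivatives of p.1^α etc.
  have hxα : HasFDerivAt (fun p : ℝ × ℝ => p.1 ^ α)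
      ((α * m1s ^ (α - 1)) • ContinuousLinearMap.fst ℝ ℝ ℝ) p0 := by
    have := (Real.hasDerivAt_rpow_const (x := m1s) (p := α)
      (Or.inl hm1.ne')).comp_hasFDerivAt p0 (hasFDerivAt_fst (𝕜 := ℝ) (p := p0)); exact this
  have hxβ : HasFDerivAt (fun p : ℝ × ℝ => p.1 ^ (β + 1))
      (((β + 1) * m1s ^ (β + 1 - 1)) • ContinuousLinearMap.fst ℝ ℝ ℝ) p0 := by
    have := (Real.hasDerivAt_rpow_const (x := m1s) (p := β + 1)
      (Or.inl hm1.ne')).comp_hasFDerivAt p0 (hasFDerivAt_fst (𝕜 := ℝ) (p := p0)); exact this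
  have hyα : HasFDerivAt (fun p : ℝ × ℝ => p.2 ^ α)
      ((α * m2s ^ (α - 1)) • ContinuousLinearMap.snd ℝ ℝ ℝ) p0 := by
    have := (Real.hasDerivAt_rpow_const (x := m2s) (p := α)
      (Or.inl hm2.ne')).comp_hasFDerivAt p0 (hasFDerivAt_snd (𝕜 := ℝ) (p := p0)); exact this
  have hyβ : HasFDerivAt (fun p : ℝ × ℝ => p.2 ^ (β + 1))
      (((β + 1) * m2s ^ (β + 1 - 1)) • ContinuousLinearMap.snd ℝ ℝ ℝ) p0 := by
    have := (Real.hasDerivAt_rpow_const (x := m2s) (p := β + 1)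
      (Or.inl hm2.ne')).comp_hasFDerivAt p0 (hasFDerivAt_snd (𝕜 := ℝ) (p := p0)); exact this
  have hu0α : (1 - p0.1 - p0.2) ^ α = 0 := by
    simp [hp0, hu0, Real.zero_rpow (by linarith : α ≠ 0)]
  have hu0β : (1 - p0.1 - p0.2) ^ (β + 1) = 0 := by
    simp [hp0, hu0, Real.zero_rpow (by linarith : β + 1 ≠ 0)]
  have hf : HasFDerivAt (fun p : ℝ × ℝ => fRed lam s1 s2 sB α β p.1 p.2)
      (0 : ℝ × ℝ →L[ℝ] ℝ) p0 := by
    have t1 := (hxα.const_mul (lam * s1)).mul huβ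
    have t2 := (huα.const_mul (lam * sB)).mul hxβ
    have := t1.sub t2
    simp only [fRed]
    refine this.congr_fderiv ?_
    rw [hu0α, hu0β]
    simp
  have hg : HasFDerivAt (fun p : ℝ × ℝ => gRed lam s1 s2 sB α β p.1 p.2)
      (0 : ℝ × ℝ →L[ℝ] ℝ) p0 := by
    have t1 := (hyα.const_mul (lam * s2)).mul huβ
    have t2 := (huα.const_mul (lam * sB)).mul hyβ
    have := t1.sub t2
    simp only [gRed]
    refine this.congr_fderiv ?_
    rw [hu0α, hu0β]
    simp
  have := hf.prodMk hg
  refine this.congr_fderiv ?_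
  ext x <;> simp
end

section
/- Fix real statuses s1, s2 > 0 and a real exponent δ > 0. Define, for sB > 0, the coordinates of the interior equilibrium E7: m1*(sB) = (s1/sB)^δ / D(sB), m2*(sB) = (s2/sB)^δ / D(sB), b*(sB) = 1 / D(sB), where D(sB) = 1 + (s1/sB)^δ + (s2/sB)^δ. Then on (0, ∞) the function b* is strictly increasing in sB, and the functions m1* and m2* are strictly decreasing in sB. -/
open Real Set

lemma rpow_div_anti {s δ : ℝ} (hs : 0 < s) (hδ : 0 < δ) {x y : ℝ}
    (hx : 0 < x) (hxy : x < y) : (s / y) ^ δ < (s / x) ^ δ := by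
  have hy : 0 < y := hx.trans hxy
  apply Real.rpow_lt_rpow (by positivity) _ hδ
  exact div_lt_div_of_pos_left hs hx hxy

lemma prod_id {s1 s2 δ : ℝ} (hs1 : 0 < s1) (hs2 : 0 < s2) {x y : ℝ}
    (hx : 0 < x) (hy : 0 < y) :
    (s1 / x) ^ δ * (s2 / y) ^ δ = (s1 / y) ^ δ * (s2 / x) ^ δ := by
  rw [← Real.mul_rpow (by positivity) (by positivity),
      ← Real.mul_rpow (by positivity) (by positivity)]
  congr 1
  field_simp

/-- Monotone dependence of the interior equilibrium `E7` on the bilingual status `sB`: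
the bilingual fraction `b*` is strictly increasing in `sB`, while both monolingual
fractions `m1*`, `m2*` are strictly decreasing in `sB`, on `(0, ∞)`. -/
theorem E7_monotone_in_bilingual_status (s1 s2 δ : ℝ)
    (hs1 : 0 < s1) (hs2 : 0 < s2) (hδ : 0 < δ) :
    let D : ℝ → ℝ := fun sB => 1 + (s1 / sB) ^ δ + (s2 / sB) ^ δ
    let m1star : ℝ → ℝ := fun sB => (s1 / sB) ^ δ / D sB
    let m2star : ℝ → ℝ := fun sB => (s2 / sB) ^ δ / D sB
    let bstar : ℝ → ℝ := fun sB => 1 / D sB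
    StrictMonoOn bstar (Ioi (0 : ℝ)) ∧
    StrictAntiOn m1star (Ioi (0 : ℝ)) ∧
    StrictAntiOn m2star (Ioi (0 : ℝ)) := by
  intro D m1star m2star bstar
  have hD : ∀ x : ℝ, 0 < x → 0 < D x := by
    intro x hx
    have h1 : 0 < (s1 / x) ^ δ := Real.rpow_pos_of_pos (by positivity) δ
    have h2 : 0 < (s2 / x) ^ δ := Real.rpow_pos_of_pos (by positivity) δ
    simp only [D]; linarith
  refine ⟨?_, ?_, ?_⟩
  · intro x hx y hy hxy
    simp only [mem_Ioi] at hx hy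
    have h1 := rpow_div_anti hs1 hδ hx hxy
    have h2 := rpow_div_anti hs2 hδ hx hxy
    have hDy := hD y hy
    have hDx := hD x hx
    simp only [bstar, D] at *
    apply div_lt_div_of_pos_left one_pos hDy
    linarith
  · intro x hx y hy hxy
    simp only [mem_Ioi] at hx hy
    have h1 := rpow_div_anti hs1 hδ hx hxy
    have h2 := rpow_div_anti hs2 hδ hx hxy
    have hp := prod_id hs1 hs2 hx hy (δ := δ)
    have hDy := hD y hy
    have hDx := hD x hx
    simp only [m1star, D] at *
    rw [div_lt_div_iff₀ hDy hDx]
    nlinarith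
  · intro x hx y hy hxy
    simp only [mem_Ioi] at hx hy
    have h1 := rpow_div_anti hs1 hδ hx hxy
    have h2 := rpow_div_anti hs2 hδ hx hxy
    have hp := prod_id hs2 hs1 hx hy (δ := δ)
    have hDy := hD y hy
    have hDx := hD x hx
    simp only [m2star, D] at *
    rw [div_lt_div_iff₀ hDy hDx]
    nlinarith
end
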